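/- Let A be an n×n real symmetric positive definite matrix with energy decomposition ℰ = {E_k}_{k=1}^m, and let 𝒫 = {P_j}_{j=1}^M be a partition of {1,…,n}. Then Σ_{j=1}^M underline(A)_{P_j} ⪯ A ⪯ Σ_{j=1}^M overline(A)_{P_j} in the Loewner order. -/

import Mathlib

open Matrix BigOperators
open scoped Classical

noncomputable section

/-- The 0/1 diagonal projection matrix onto the coordinates in `S`. -/
def projSet {n : ℕ} (S : Finset (Fin n)) : Matrix (Fin n) (Fin n) ℝ :=
  Matrix.diagonal (fun i => if i ∈ S then (1:ℝ) else 0)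

/-- The diagonal concentration `E^d` of `E`: diagonal with entries `∑_j |E_{ij}|`. -/
def diagConc {n : ℕ} (E : Matrix (Fin n) (Fin n) ℝ) : Matrix (Fin n) (Fin n) ℝ :=
  Matrix.diagonal (fun i => ∑ j, |E i j|)

/-- `E` is interior to `S` if `P_S E P_S = E`. -/
def InteriorTo {n : ℕ} (E : Matrix (Fin n) (Fin n) ℝ) (S : Finset (Fin n)) : Prop :=
  projSet S * E * projSet S = E

/-- The interior energy `underline(A)_S = ∑_{E_k interior to S} E_k`. -/
def interiorEnergy {n m : ℕ} (E : Fin m → Matrix (Fin n) (Fin n) ℝ) (S : Finset (Fin n)) :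
    Matrix (Fin n) (Fin n) ℝ :=
  ∑ k, if InteriorTo (E k) S then E k else 0

/-- The closed energy
`overline(A)_S = underline(A)_S + ∑_{E_k not interior to S} P_S E_k^d P_S`. -/
def closedEnergy {n m : ℕ} (E : Fin m → Matrix (Fin n) (Fin n) ℝ) (S : Finset (Fin n)) :
    Matrix (Fin n) (Fin n) ℝ :=
  interiorEnergy E S +
    ∑ k, if InteriorTo (E k) S then 0 else projSet S * diagConc (E k) * projSet S

/-- A partition of `{1,…,n}` into pairwise disjoint nonempty subsets covering everything. -/
def IsPartition {n M : ℕ} (P : Fin M → Finset (Fin n)) : Prop :=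
  (∀ j, (P j).Nonempty) ∧ (∀ j j', j ≠ j' → Disjoint (P j) (P j')) ∧
    Finset.univ.biUnion P = Finset.univ

/-- Euclidean norm of a vector. -/
def norm2 {ι : Type} [Fintype ι] (x : ι → ℝ) : ℝ := Real.sqrt (x ⬝ᵥ x)

/-- `A`-energy norm of a vector: `‖x‖_A = √(xᵀ A x)`. -/
def normA {ι : Type} [Fintype ι] (A : Matrix ι ι ℝ) (x : ι → ℝ) : ℝ :=
  Real.sqrt (x ⬝ᵥ A.mulVec x)

/-- Spectral (ℓ²-operator) norm of a square real matrix. -/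
def specNorm {ι : Type} [Fintype ι] [DecidableEq ι] (B : Matrix ι ι ℝ) : ℝ :=
  ‖Matrix.toEuclideanCLM (𝕜 := ℝ) B‖

/-- Smallest value of the Rayleigh quotient; for a symmetric matrix this is the
smallest eigenvalue. -/
def lamMin {ι : Type} [Fintype ι] (B : Matrix ι ι ℝ) : ℝ :=
  sInf {r : ℝ | ∃ x : ι → ℝ, x ⬝ᵥ x = 1 ∧ r = x ⬝ᵥ B.mulVec x}

/-- Largest value of the Rayleigh quotient; for a symmetric matrix this is the
largest eigenvalue. -/
def lamMax {ι : Type} [Fintype ι] (B : Matrix ι ι ℝ) : ℝ :=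
  sSup {r : ℝ | ∃ x : ι → ℝ, x ⬝ᵥ x = 1 ∧ r = x ⬝ᵥ B.mulVec x}

/-- Patch layers: `S_0(P_j) = P_j` and `S_{k+1}(P_j)` adds all patches `P_{j'}` such that
some energy element has a nonzero row indexed in `P_{j'}` and a nonzero row indexed in
`S_k(P_j)`. -/
def layer {n m M : ℕ} (E : Fin m → Matrix (Fin n) (Fin n) ℝ) (P : Fin M → Finset (Fin n))
    (j : Fin M) : ℕ → Finset (Fin n)
  | 0 => P j
  | (k+1) => layer E P j k ∪ Finset.univ.biUnion (fun j' =>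
      if (∃ l, (∃ r ∈ P j', (E l) r ≠ 0) ∧ (∃ r ∈ layer E P j k, (E l) r ≠ 0))
      then P j' else ∅)

/-- Condition factor `δ(P_j) = ‖(Φ̂_jᵀ (overline(A)_{P_j}|_{P_j})⁻¹ Φ̂_j)⁻¹‖₂`, where
`Φ̂_j` is the submatrix of `Φ_j` on the rows in `P_j` and `overline(A)_{P_j}|_{P_j}` is the
submatrix of the closed energy on the rows and columns in `P_j`. -/
def condFactor {n m : ℕ} (E : Fin m → Matrix (Fin n) (Fin n) ℝ) (S : Finset (Fin n))
    {qj : ℕ} (Φj : Matrix (Fin n) (Fin qj) ℝ) : ℝ :=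
  specNorm ((((Φj.submatrix (Subtype.val : {i // i ∈ S} → Fin n) id))ᵀ *
      ((closedEnergy E S).submatrix (Subtype.val : {i // i ∈ S} → Fin n) Subtype.val)⁻¹ *
      (Φj.submatrix (Subtype.val : {i // i ∈ S} → Fin n) id))⁻¹)

/-- The combined matrix `Φ = [Φ_1 ⋯ Φ_M]`, with columns indexed by pairs `⟨j, c⟩`
(column `c` of the block `Φ_j`). -/
def bigPhi {n M : ℕ} (q : Fin M → ℕ) (Φ : (j : Fin M) → Matrix (Fin n) (Fin (q j)) ℝ) :
    Matrix (Fin n) ((j : Fin M) × Fin (q j)) ℝ :=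
  fun r c => Φ c.1 r c.2

/-- `ψ` is a minimizer of `‖x‖_A` over vectors supported in `S` subject to `Φᵀ x = e_i`. -/
def IsMinimizerOn {n : ℕ} {ι : Type} [Fintype ι] [DecidableEq ι]
    (A : Matrix (Fin n) (Fin n) ℝ) (Φ : Matrix (Fin n) ι ℝ) (S : Finset (Fin n)) (i : ι)
    (ψ : Fin n → ℝ) : Prop :=
  (∀ r, r ∉ S → ψ r = 0) ∧ Φᵀ.mulVec ψ = Pi.single i 1 ∧
    ∀ x : Fin n → ℝ, (∀ r, r ∉ S → x r = 0) → Φᵀ.mulVec x = Pi.single i 1 →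
      ψ ⬝ᵥ A.mulVec ψ ≤ x ⬝ᵥ A.mulVec x

/-- `α(P_j)`: the largest value of `(xᵀ overline(A)_{P_j} x)/(xᵀ underline(A)_{P_j} x)`
over nonzero `x` in the column span of `U_j`. -/
def alphaFactor {n m : ℕ} (E : Fin m → Matrix (Fin n) (Fin n) ℝ) (S : Finset (Fin n))
    {uj : ℕ} (Uj : Matrix (Fin n) (Fin uj) ℝ) : ℝ :=
  sSup {r : ℝ | ∃ x ∈ Submodule.span ℝ (Set.range Ujᵀ), x ≠ 0 ∧
    r = (x ⬝ᵥ (closedEnergy E S).mulVec x) / (x ⬝ᵥ (interiorEnergy E S).mulVec x)}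

section Aux

variable {n : ℕ}

lemma projSet_mul_projSet_of_disjoint {S T : Finset (Fin n)} (h : Disjoint S T) :
    projSet S * projSet T = 0 := by
  unfold projSet
  rw [Matrix.diagonal_mul_diagonal]
  have : (fun i => (if i ∈ S then (1:ℝ) else 0) * (if i ∈ T then 1 else 0)) = fun _ => 0 := by
    funext i
    by_cases hS : i ∈ S
    · have hT : i ∉ T := Finset.disjoint_left.mp h hS
      simp [hS, hT]
    · simp [hS]
  rw [this, Matrix.diagonal_zero]

lemma eq_zero_of_interiorTo_disjoint {E : Matrix (Fin n) (Fin n) ℝ} {S T : Finset (Fin n)}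
    (hS : InteriorTo E S) (hT : InteriorTo E T) (h : Disjoint S T) : E = 0 := by
  unfold InteriorTo at hS hT
  calc E = projSet S * E * projSet S := hS.symm
    _ = projSet S * (projSet T * E * projSet T) * projSet S := by rw [hT]
    _ = (projSet S * projSet T) * E * (projSet T * projSet S) := by
        simp only [Matrix.mul_assoc]
    _ = 0 := by
        rw [projSet_mul_projSet_of_disjoint h, projSet_mul_projSet_of_disjoint h.symm]
        simp

lemma projSet_mul_diagonal_mul_projSet (S : Finset (Fin n)) (d : Fin n → ℝ) :
    projSet S * Matrix.diagonal d * projSet S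
      = Matrix.diagonal (fun i => if i ∈ S then d i else 0) := by
  unfold projSet
  rw [Matrix.diagonal_mul_diagonal, Matrix.diagonal_mul_diagonal]
  apply congrArg Matrix.diagonal
  funext i
  by_cases hS : i ∈ S <;> simp [hS]

lemma posSemidef_projSet_diagConc (S : Finset (Fin n)) (B : Matrix (Fin n) (Fin n) ℝ) :
    (projSet S * diagConc B * projSet S).PosSemidef := by
  rw [diagConc, projSet_mul_diagonal_mul_projSet]
  refine Matrix.PosSemidef.diagonal fun i => ?_
  by_cases hS : i ∈ S
  · simp only [hS, if_true]
    exact Finset.sum_nonneg fun j _ => abs_nonneg _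
  · simp [hS]

lemma posSemidef_sum {ι : Type*} (s : Finset ι) (f : ι → Matrix (Fin n) (Fin n) ℝ)
    (h : ∀ i ∈ s, (f i).PosSemidef) : (∑ i ∈ s, f i).PosSemidef := by
  classical
  induction s using Finset.induction with
  | empty => simpa using Matrix.PosSemidef.zero
  | @insert a s ha ih =>
    rw [Finset.sum_insert ha]
    exact (h a (Finset.mem_insert_self a s)).add
      (ih fun i hi => h i (Finset.mem_insert_of_mem hi))

lemma posSemidef_diagConc_sub {B : Matrix (Fin n) (Fin n) ℝ} (hB : B.PosSemidef) :
    (diagConc B - B).PosSemidef := by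
  have hsym : ∀ i j, B j i = B i j := by
    intro i j
    have := congrFun (congrFun hB.1 i) j
    simpa [Matrix.conjTranspose_apply] using this
  refine Matrix.PosSemidef.of_dotProduct_mulVec_nonneg ?_ ?_
  · have h1 : (diagConc B).IsHermitian := Matrix.isHermitian_diagonal _
    exact h1.sub hB.1
  · intro x
    have hx : star x = x := by simp
    rw [hx, Matrix.sub_mulVec, dotProduct_sub]
    have hd : x ⬝ᵥ (diagConc B) *ᵥ x = ∑ i, (∑ j, |B i j|) * (x i * x i) := by
      simp [diagConc, Matrix.mulVec_diagonal, dotProduct, mul_comm, mul_assoc, mul_left_comm]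
    have hb : x ⬝ᵥ B *ᵥ x = ∑ i, ∑ j, x i * B i j * x j := by
      simp [Matrix.mulVec, dotProduct, Finset.mul_sum, mul_assoc]
    rw [hd, hb]
    have key : 0 ≤ ∑ i, ∑ j, (|B i j| * (x i * x i) - x i * B i j * x j) := by
      have h2 : ∑ i, ∑ j, (|B i j| * (x i * x i) - x i * B i j * x j)
          = (1/2) * ∑ i, ∑ j, ((|B i j| * (x i * x i) - x i * B i j * x j)
            + (|B j i| * (x j * x j) - x j * B j i * x i)) := by
        have hswap : ∑ i, ∑ j, (|B j i| * (x j * x j) - x j * B j i * x i)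
            = ∑ i, ∑ j, (|B i j| * (x i * x i) - x i * B i j * x j) := Finset.sum_comm
        simp only [Finset.sum_add_distrib, hswap]
        ring
      rw [h2]
      refine mul_nonneg (by norm_num) ?_
      refine Finset.sum_nonneg fun i _ => Finset.sum_nonneg fun j _ => ?_
      have h3 : B j i = B i j := hsym i j
      rw [h3]
      have h4 : x i * B i j * x j ≤ |B i j| * |x i| * |x j| := by
        calc x i * B i j * x j ≤ |x i * B i j * x j| := le_abs_self _
          _ = |B i j| * |x i| * |x j| := by rw [abs_mul, abs_mul]; ring
      have h5 : x j * B i j * x i ≤ |B i j| * |x i| * |x j| := by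
        calc x j * B i j * x i ≤ |x j * B i j * x i| := le_abs_self _
          _ = |B i j| * |x i| * |x j| := by rw [abs_mul, abs_mul]; ring
      nlinarith [sq_nonneg (|x i| - |x j|), abs_nonneg (B i j), sq_abs (x i), sq_abs (x j)]
    calc (0:ℝ) ≤ ∑ i, ∑ j, (|B i j| * (x i * x i) - x i * B i j * x j) := key
      _ = ∑ i, (∑ j, |B i j| * (x i * x i) - ∑ j, x i * B i j * x j) := by
          simp [Finset.sum_sub_distrib]
      _ = ∑ i, (∑ j, |B i j|) * (x i * x i) - ∑ i, ∑ j, x i * B i j * x j := by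
          rw [Finset.sum_sub_distrib]
          congr 1
          refine Finset.sum_congr rfl fun i _ => ?_
          rw [Finset.sum_mul]

lemma sum_projSet_diagConc {M : ℕ} (P : Fin M → Finset (Fin n)) (hP : IsPartition P)
    (B : Matrix (Fin n) (Fin n) ℝ) :
    ∑ j, projSet (P j) * diagConc B * projSet (P j) = diagConc B := by
  have hrw : ∀ j, projSet (P j) * diagConc B * projSet (P j)
      = Matrix.diagonal (fun i => if i ∈ P j then ∑ l, |B i l| else 0) := fun j => by
    rw [diagConc, projSet_mul_diagonal_mul_projSet]
  simp only [hrw]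
  ext i i'
  simp only [Matrix.sum_apply, Matrix.diagonal_apply, diagConc]
  by_cases hii : i = i'
  · subst hii
    simp only [if_pos rfl]
    obtain ⟨j0, hj0⟩ : ∃ j0, i ∈ P j0 := by
      have : i ∈ Finset.univ.biUnion P := hP.2.2 ▸ Finset.mem_univ i
      simpa using this
    rw [Finset.sum_eq_single_of_mem j0 (Finset.mem_univ j0)]
    · simp [hj0]
    · intro j _ hj
      have : i ∉ P j := fun hin => Finset.disjoint_left.mp (hP.2.1 j j0 hj) hin hj0
      simp [this]
  · simp [hii]

end Aux

lemma closedEnergy_eq {n m : ℕ} (E : Fin m → Matrix (Fin n) (Fin n) ℝ) (S : Finset (Fin n)) :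
    closedEnergy E S = ∑ k, (if InteriorTo (E k) S then E k
      else projSet S * diagConc (E k) * projSet S) := by
  unfold closedEnergy interiorEnergy
  rw [← Finset.sum_add_distrib]
  refine Finset.sum_congr rfl fun k _ => ?_
  by_cases h : InteriorTo (E k) S <;> simp [h]

/-- Let `A` be SPD with energy decomposition `{E_k}` and `𝒫 = {P_j}` a
partition of `{1,…,n}`. Then `∑_j underline(A)_{P_j} ⪯ A ⪯ ∑_j overline(A)_{P_j}`
in the Loewner order. -/
theorem sum_interiorEnergy_le_le_sum_closedEnergy {n m M : ℕ}
    (A : Matrix (Fin n) (Fin n) ℝ) (hA : A.PosDef)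
    (E : Fin m → Matrix (Fin n) (Fin n) ℝ) (hE : ∀ k, (E k).PosSemidef)
    (hsum : A = ∑ k, E k)
    (P : Fin M → Finset (Fin n)) (hP : IsPartition P) :
    (A - ∑ j, interiorEnergy E (P j)).PosSemidef ∧
      ((∑ j, closedEnergy E (P j)) - A).PosSemidef := by
  constructor
  · have h1 : A - ∑ j, interiorEnergy E (P j)
        = ∑ k, (E k - ∑ j, if InteriorTo (E k) (P j) then E k else 0) := by
      rw [hsum]
      unfold interiorEnergy
      rw [Finset.sum_comm, Finset.sum_sub_distrib]
    rw [h1]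
    refine posSemidef_sum _ _ fun k _ => ?_
    by_cases hz : E k = 0
    · simp [hz, Matrix.PosSemidef.zero]
    by_cases hex : ∃ j0, InteriorTo (E k) (P j0)
    · obtain ⟨j0, hj0⟩ := hex
      have hsum0 : (∑ j, if InteriorTo (E k) (P j) then E k else 0) = E k := by
        rw [Finset.sum_eq_single_of_mem j0 (Finset.mem_univ j0)]
        · rw [if_pos hj0]
        · intro j _ hj
          rw [if_neg]
          intro hint
          exact hz (eq_zero_of_interiorTo_disjoint hint hj0 (hP.2.1 j j0 hj))
      rw [hsum0, sub_self]
      exact Matrix.PosSemidef.zero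
    · push_neg at hex
      have hsum0 : (∑ j, if InteriorTo (E k) (P j) then E k else 0) = 0 := by
        refine Finset.sum_eq_zero fun j _ => ?_
        rw [if_neg (hex j)]
      rw [hsum0, sub_zero]
      exact hE k
  · have h1 : (∑ j, closedEnergy E (P j)) - A
        = ∑ k, ((∑ j, if InteriorTo (E k) (P j) then E k
            else projSet (P j) * diagConc (E k) * projSet (P j)) - E k) := by
      rw [hsum]
      simp only [closedEnergy_eq]
      rw [Finset.sum_comm, Finset.sum_sub_distrib]
    rw [h1]
    refine posSemidef_sum _ _ fun k _ => ?_
    by_cases hex : ∃ j0, InteriorTo (E k) (P j0)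
    · obtain ⟨j0, hj0⟩ := hex
      have hsplit : (∑ j, if InteriorTo (E k) (P j) then E k
            else projSet (P j) * diagConc (E k) * projSet (P j))
          = E k + ∑ j ∈ Finset.univ.erase j0, (if InteriorTo (E k) (P j) then E k
            else projSet (P j) * diagConc (E k) * projSet (P j)) := by
        rw [← Finset.add_sum_erase _ _ (Finset.mem_univ j0), if_pos hj0]
      rw [hsplit, add_sub_cancel_left]
      refine posSemidef_sum _ _ fun j _ => ?_
      by_cases hint : InteriorTo (E k) (P j)
      · rw [if_pos hint]; exact hE k
      · rw [if_neg hint]; exact posSemidef_projSet_diagConc _ _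
    · push_neg at hex
      have hsum0 : (∑ j, if InteriorTo (E k) (P j) then E k
            else projSet (P j) * diagConc (E k) * projSet (P j))
          = ∑ j, projSet (P j) * diagConc (E k) * projSet (P j) := by
        refine Finset.sum_congr rfl fun j _ => ?_
        rw [if_neg (hex j)]
      rw [hsum0, sum_projSet_diagConc P hP]
      exact posSemidef_diagConc_sub (hE k)
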